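/- Let u ∈ ℂ and let τ⁰, τ¹ : ℤ → ℂ be nowhere-vanishing functions satisfying the coupled bilinear equations τ⁰_{m+1}·τ⁰_{m−1} = (τ⁰_m)² + u·(τ¹_m)² and τ¹_{m+1}·τ¹_{m−1} = (τ¹_m)² + u·(τ⁰_m)² for all m ∈ ℤ. Define G_m := u·(τ¹_m)²/(τ⁰_m)². Then for all m ∈ ℤ: G_{m+1}·G_{m−1}·(G_m + 1)² = (G_m + u²)². -/

import Mathlib

/-- From the coupled autonomous Hirota equations of the `Y^{2,0}` system, the cluster
variable `G_m = u·(τ¹_m)²/(τ⁰_m)²` satisfies the autonomous cluster flow equation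
`G_{m+1}·G_{m−1}·(G_m + 1)² = (G_m + u²)²`. -/
theorem Y20_hirota_to_cluster_flow (u : ℂ) (τ0 τ1 : ℤ → ℂ)
    (h0 : ∀ m : ℤ, τ0 m ≠ 0) (h1 : ∀ m : ℤ, τ1 m ≠ 0)
    (hrec0 : ∀ m : ℤ, τ0 (m + 1) * τ0 (m - 1) = (τ0 m) ^ 2 + u * (τ1 m) ^ 2)
    (hrec1 : ∀ m : ℤ, τ1 (m + 1) * τ1 (m - 1) = (τ1 m) ^ 2 + u * (τ0 m) ^ 2)
    (G : ℤ → ℂ) (hG : ∀ m : ℤ, G m = u * (τ1 m) ^ 2 / (τ0 m) ^ 2) :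
    ∀ m : ℤ, G (m + 1) * G (m - 1) * (G m + 1) ^ 2 = (G m + u ^ 2) ^ 2 := by
  intro m
  have e0 := hrec0 m
  have e1 := hrec1 m
  rw [hG (m + 1), hG (m - 1), hG m]
  have hp := h0 (m + 1); have hq := h0 (m - 1); have hr := h0 m
  field_simp
  linear_combination (u ^ 2 * (τ1 (m + 1) * τ1 (m - 1) + τ1 m ^ 2 + u * τ0 m ^ 2) *
      (τ0 m ^ 2 + u * τ1 m ^ 2) ^ 2) * e1 -
    (u ^ 2 * (τ1 m ^ 2 + u * τ0 m ^ 2) ^ 2 *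
      (τ0 (m + 1) * τ0 (m - 1) + τ0 m ^ 2 + u * τ1 m ^ 2)) * e0
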